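/- Let H be a complex Hilbert space and let w be a partial isometry in B(H), with p = w w* and q = w* w the associated projections. Then the set F_w = { x ∈ B(H) : ‖x‖ ≤ 1 and x w* = w w* } equals { w + (1 - p) y (1 - q) : y ∈ B(H), ‖y‖ ≤ 1 }. -/

import Mathlib

variable {H : Type*} [NormedAddCommGroup H] [InnerProductSpace ℂ H] [CompleteSpace H]

open ContinuousLinearMap in
lemma aux_contraction (x : H →L[ℂ] H) (hx : ‖x‖ ≤ 1) (u : H) (hu : ‖x u‖ = ‖u‖) :
    star x (x u) = u := by
  have hnorm : ‖star x (x u)‖ ≤ ‖u‖ := by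
    calc ‖star x (x u)‖ ≤ ‖star x‖ * ‖x u‖ := le_opNorm _ _
    _ = ‖x‖ * ‖x u‖ := by rw [norm_star]
    _ ≤ 1 * ‖u‖ := by rw [hu]; exact mul_le_mul_of_nonneg_right hx (norm_nonneg _)
    _ = ‖u‖ := one_mul _
  have hinner : RCLike.re (inner ℂ (star x (x u)) u : ℂ) = ‖u‖^2 := by
    rw [star_eq_adjoint, adjoint_inner_left, inner_self_eq_norm_sq, hu]
  have key : ‖star x (x u) - u‖^2 ≤ 0 := by
    have h := @norm_sub_sq ℂ _ _ _ _ (star x (x u)) u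
    rw [hinner] at h
    nlinarith [norm_nonneg (star x (x u)), norm_nonneg u]
  have : star x (x u) - u = 0 := by
    have := pow_eq_zero_iff (n := 2) (by norm_num) |>.mp
      (le_antisymm key (sq_nonneg _))
    simpa [norm_eq_zero] using this
  exact sub_eq_zero.mp this

open ContinuousLinearMap in
lemma aux_proj_inner (e : H →L[ℂ] H) (he : star e = e) (he2 : e * e = e) (ξ η : H) :
    (inner ℂ (e ξ) (η - e η) : ℂ) = 0 := by
  have h0 : e (η - e η) = 0 := by
    rw [map_sub, ← mul_apply_eq_comp, he2, sub_self]
  calc (inner ℂ (e ξ) (η - e η) : ℂ)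
      = inner ℂ ((ContinuousLinearMap.adjoint e) ξ) (η - e η) := by
        rw [← star_eq_adjoint, he]
  _ = inner ℂ ξ (e (η - e η)) := adjoint_inner_left _ _ _
  _ = 0 := by rw [h0, inner_zero_right]

open ContinuousLinearMap in
lemma aux_proj_pyth (e : H →L[ℂ] H) (he : star e = e) (he2 : e * e = e) (ξ : H) :
    ‖e ξ‖^2 + ‖ξ - e ξ‖^2 = ‖ξ‖^2 := by
  have h := @norm_add_sq ℂ _ _ _ _ (e ξ) (ξ - e ξ)
  rw [aux_proj_inner e he he2 ξ ξ] at h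
  simp only [map_zero, mul_zero, add_zero] at h
  have h2 : e ξ + (ξ - e ξ) = ξ := by abel
  rw [h2] at h
  linarith

open ContinuousLinearMap in
lemma aux_w_norm (w : H →L[ℂ] H) (hw : w * star w * w = w) (ξ : H) : ‖w ξ‖ = ‖(star w * w) ξ‖ := by
  set q := star w * w with hq
  have hqs : star q = q := by simp [hq, star_mul, mul_assoc]
  have h1 : (inner ℂ (w ξ) (w ξ) : ℂ) = inner ℂ (q ξ) ξ := by
    rw [hq, mul_apply_eq_comp, star_eq_adjoint, adjoint_inner_left]
  have hq2 : q * q = q := by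
    rw [hq]
    calc star w * w * (star w * w) = star w * (w * star w * w) := by noncomm_ring
    _ = star w * w := by rw [hw]
  have h2 : (inner ℂ ((q * q) ξ) ξ : ℂ) = inner ℂ (q ξ) (q ξ) := by
    rw [mul_apply_eq_comp,
      show q (q ξ) = (ContinuousLinearMap.adjoint q) (q ξ) by rw [← star_eq_adjoint, hqs]]
    exact adjoint_inner_left _ _ _
  rw [hq2] at h2
  have h3 : ‖w ξ‖^2 = ‖q ξ‖^2 := by
    rw [← inner_self_eq_norm_sq (𝕜 := ℂ) (w ξ), ← inner_self_eq_norm_sq (𝕜 := ℂ) (q ξ), h1, h2]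
  exact (sq_eq_sq₀ (norm_nonneg _) (norm_nonneg _)).mp h3

open ContinuousLinearMap

theorem stmt5 (w : H →L[ℂ] H) (hw : w * star w * w = w) :
    {x : H →L[ℂ] H | ‖x‖ ≤ 1 ∧ x * star w = w * star w} =
      {z : H →L[ℂ] H | ∃ y : H →L[ℂ] H, ‖y‖ ≤ 1 ∧
        z = w + (1 - w * star w) * y * (1 - star w * w)} := by
  have hw' : star w * w * star w = star w := by
    have := congrArg star hw
    simpa [star_mul, mul_assoc] using this
  set p := w * star w with hp
  set q := star w * w with hq
  have hps : star p = p := by rw [hp]; simp [star_mul]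
  have hqs : star q = q := by rw [hq]; simp [star_mul]
  have hp2 : p * p = p := by
    rw [hp]; calc w * star w * (w * star w) = (w * star w * w) * star w := by noncomm_ring
    _ = w * star w := by rw [hw]
  have hq2 : q * q = q := by
    rw [hq]; calc star w * w * (star w * w) = (star w * w * star w) * w := by noncomm_ring
    _ = star w * w := by rw [hw']
  have hpw : p * w = w := by
    rw [hp]; rw [show w * star w * w = w from hw]
  have hwq : w * q = w := by
    rw [hq, ← mul_assoc, hw]
  ext x
  simp only [Set.mem_setOf_eq]
  constructor
  · rintro ⟨hx1, hx2⟩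
    have hxq : x * q = w := by
      rw [hq, ← mul_assoc, hx2, hw]
    -- star x * w = q
    have hsxw : star x * w = q := by
      ext ξ
      have h1 : x (q ξ) = w ξ := by rw [← mul_apply_eq_comp, hxq]
      have h2 : ‖x (q ξ)‖ = ‖q ξ‖ := by
        rw [h1, aux_w_norm w hw ξ, hq]
      have := aux_contraction x hx1 (q ξ) h2
      rw [h1] at this
      rw [mul_apply_eq_comp]
      exact this
    have hwx : star w * x = q := by
      have := congrArg star hsxw
      rwa [star_mul, star_star, hqs] at this
    have hpx : p * x = w := by
      rw [hp, mul_assoc, hwx]; exact hwq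
    refine ⟨x, hx1, ?_⟩
    have hexp : (1 - p) * x * (1 - q) = x - x * q - (p * x - p * x * q) := by
      noncomm_ring
    rw [hexp, hxq, hpx, hwq]
    abel
  · rintro ⟨y, hy, rfl⟩
    constructor
    · -- norm bound
      apply opNorm_le_bound _ zero_le_one
      intro ξ
      rw [one_mul]
      have happ : (w + (1 - p) * y * (1 - q)) ξ
          = w ξ + (y ((1 - q) ξ) - p (y ((1 - q) ξ))) := by
        simp only [add_apply, mul_apply_eq_comp, sub_apply, one_apply_eq_self]
      rw [happ]
      set η := y ((1 - q) ξ) with hη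
      -- orthogonality: w ξ = p (w ξ)
      have hwp : w ξ = p (w ξ) := by
        conv_lhs => rw [← hpw]
        rw [mul_apply_eq_comp]
      have horth : (inner ℂ (w ξ) (η - p η) : ℂ) = 0 := by
        rw [hwp]; exact aux_proj_inner p hps hp2 _ _
      have hpyth : ‖w ξ + (η - p η)‖^2 = ‖w ξ‖^2 + ‖η - p η‖^2 := by
        have h := @norm_add_sq ℂ _ _ _ _ (w ξ) (η - p η)
        rw [horth] at h
        simpa using h
      have hb1 : ‖η - p η‖ ≤ ‖η‖ := by
        have := aux_proj_pyth p hps hp2 η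
        nlinarith [norm_nonneg (p η), norm_nonneg (η - p η), norm_nonneg η]
      have hb2 : ‖η‖ ≤ ‖ξ - q ξ‖ := by
        rw [hη]
        calc ‖y ((1 - q) ξ)‖ ≤ ‖y‖ * ‖(1 - q) ξ‖ := le_opNorm _ _
        _ ≤ 1 * ‖(1 - q) ξ‖ := mul_le_mul_of_nonneg_right hy (norm_nonneg _)
        _ = ‖ξ - q ξ‖ := by rw [one_mul]; simp [sub_apply]
      have hwn : ‖w ξ‖ = ‖q ξ‖ := by rw [aux_w_norm w hw ξ, hq]
      have hqpyth := aux_proj_pyth q hqs hq2 ξ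
      have : ‖w ξ + (η - p η)‖^2 ≤ ‖ξ‖^2 := by
        rw [hpyth, hwn]
        nlinarith [norm_nonneg (η - p η), norm_nonneg (ξ - q ξ), norm_nonneg η]
      nlinarith [norm_nonneg (w ξ + (η - p η)), norm_nonneg ξ]
    · -- the intertwining relation
      have hqsw : (1 - q) * star w = 0 := by
        rw [sub_mul, one_mul, hq, hw', sub_self]
      calc (w + (1 - p) * y * (1 - q)) * star w
          = w * star w + (1 - p) * y * ((1 - q) * star w) := by noncomm_ring
      _ = w * star w := by rw [hqsw, mul_zero, add_zero]
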